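/- arXiv:1601.04632 — 2 statements merged into one kernel-verified Lean document; each statement's English description precedes it below -/
import Mathlib

section
/- Let ν ≥ 1 be an integer. For every integer n ≥ 1 and every β = (β₁,…,βₙ) ∈ ℕⁿ there exists a subset I ⊆ {1,…,n} such that: (i) |I| ≤ 2^{ν−1} − 1; (ii) β_j ≠ 0 for all j ∈ I; and (iii) for every J ⊆ {1,…,n} with J ∩ I = ∅ and |J| ≤ |I| + 1, one has ν·Σ_{j∈J} β_j ≤ Σ_{j=1}^n β_j. -/
open Finset

/-- A sum of an antitone function over a finite set of naturals all `≥ k` is at most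
the sum over the interval `[k, k + card)`. -/
lemma antitone_sum_le_aux {b : ℕ → ℕ} (hb : Antitone b) (A : Finset ℕ) :
    ∀ (k : ℕ), (∀ a ∈ A, k ≤ a) →
      ∑ a ∈ A, b a ≤ ∑ m ∈ Finset.Ico k (k + A.card), b m := by
  induction A using Finset.induction_on_min with
  | empty => simp
  | insert a s hmin ih =>
    intro k hk
    have has : a ∉ s := fun h => lt_irrefl a (hmin a h)
    rw [Finset.sum_insert has, Finset.card_insert_of_notMem has]
    have hka : k ≤ a := hk a (mem_insert_self _ _)
    have h1 : ∑ x ∈ s, b x ≤ ∑ m ∈ Finset.Ico (k + 1) ((k + 1) + s.card), b m :=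
      ih (k + 1) (fun x hx => Nat.succ_le_of_lt (lt_of_le_of_lt hka (hmin x hx)))
    have hba : b a ≤ b k := hb hka
    have hsplit : ∑ m ∈ Finset.Ico k (k + (s.card + 1)), b m
        = b k + ∑ m ∈ Finset.Ico (k + 1) (k + (s.card + 1)), b m :=
      Finset.sum_eq_sum_Ico_succ_bot (by omega) b
    rw [hsplit]
    have : (k + 1) + s.card = k + (s.card + 1) := by omega
    rw [this] at h1
    omega

/-- Combinatorial selection lemma: for `ν ≥ 1` and any `β ∈ ℕⁿ` there is a set
`I ⊆ {1,…,n}` with `|I| ≤ 2^{ν−1} − 1`, `β_j ≠ 0` on `I`, and such that every `J`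
disjoint from `I` with `|J| ≤ |I| + 1` satisfies `ν·Σ_{j∈J} β_j ≤ Σ_j β_j`. -/
theorem stmt2 (ν : ℕ) (hν : 1 ≤ ν) (n : ℕ) (hn : 1 ≤ n) (β : Fin n → ℕ) :
    ∃ I : Finset (Fin n),
      I.card ≤ 2 ^ (ν - 1) - 1 ∧
      (∀ j ∈ I, β j ≠ 0) ∧
      ∀ J : Finset (Fin n), Disjoint J I → J.card ≤ I.card + 1 →
        ν * ∑ j ∈ J, β j ≤ ∑ j, β j := by
  classical
  set S := ∑ j, β j with hS
  -- a permutation making β antitone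
  obtain ⟨e, he⟩ : ∃ e : Equiv.Perm (Fin n), Antitone (β ∘ e) := by
    refine ⟨Fin.revPerm.trans (Tuple.sort β), ?_⟩
    intro i j hij
    exact Tuple.monotone_sort β (show j.rev ≤ i.rev from Fin.rev_le_rev.mpr hij)
  -- extend to ℕ by zero
  set b : ℕ → ℕ := fun m => if h : m < n then β (e ⟨m, h⟩) else 0 with hbdef
  have hb : Antitone b := by
    intro m m' h
    simp only [hbdef]
    split_ifs with h1 h2 h2
    · exact he (show (⟨m, h2⟩ : Fin n) ≤ ⟨m', h1⟩ from h)
    · omega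
    · exact Nat.zero_le _
    · exact le_rfl
  have hbβ : ∀ j : Fin n, b ((e.symm j : Fin n) : ℕ) = β j := by
    intro j
    simp only [hbdef, (e.symm j).isLt, dif_pos, Fin.eta, Equiv.apply_symm_apply]
  have hrange : ∀ M, ∑ m ∈ Finset.range M, b m ≤ S := by
    intro M
    have h1 : ∑ m ∈ Finset.range M, b m ≤ ∑ m ∈ Finset.range (max M n), b m :=
      Finset.sum_le_sum_of_subset (Finset.range_subset_range.mpr (le_max_left _ _))
    have h2 : ∑ m ∈ Finset.range (max M n), b m = ∑ m ∈ Finset.range n, b m := by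
      refine (Finset.sum_subset (Finset.range_subset_range.mpr (le_max_right _ _)) ?_).symm
      intro x hx hxn
      simp only [Finset.mem_range] at hxn
      simp [hbdef, hxn]
    have h3 : ∑ m ∈ Finset.range n, b m = S := by
      rw [← Fin.sum_univ_eq_sum_range b n]
      have : ∀ i : Fin n, b (i : ℕ) = β (e i) := by
        intro i
        simp [hbdef, i.isLt, Fin.eta]
      rw [Finset.sum_congr rfl (fun i _ => this i)]
      exact Equiv.sum_comp e β
    omega
  -- the candidate sets
  set I : ℕ → Finset (Fin n) := fun k => (univ.filter (fun i : Fin n => (i : ℕ) < k)).image e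
    with hIdef
  have cardI : ∀ k, (I k).card ≤ k := by
    intro k
    refine le_trans Finset.card_image_le ?_
    calc (univ.filter (fun i : Fin n => (i : ℕ) < k)).card
        ≤ (Finset.range k).card := by
          refine Finset.card_le_card_of_injOn (fun i => (i : ℕ)) ?_ ?_
          · intro i hi
            rw [Finset.mem_coe, Finset.mem_filter] at hi
            exact Finset.mem_range.mpr hi.2
          · intro a _ c _ h
            exact Fin.val_injective h
      _ = k := Finset.card_range k
  -- key bound via the antitone extension
  have key : ∀ (k : ℕ) (J : Finset (Fin n)), Disjoint J (I k) →
      ∑ j ∈ J, β j ≤ ∑ m ∈ Finset.Ico k (k + J.card), b m := by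
    intro k J hJ
    set f : Fin n → ℕ := fun j => ((e.symm j : Fin n) : ℕ) with hf
    have hinj : Set.InjOn f J := fun a _ c _ h =>
      e.symm.injective (Fin.val_injective h)
    have hcard : (J.image f).card = J.card := Finset.card_image_of_injOn hinj
    have hsum : ∑ m ∈ J.image f, b m = ∑ j ∈ J, β j := by
      rw [Finset.sum_image (fun a ha c hc h => hinj ha hc h)]
      exact Finset.sum_congr rfl (fun j _ => hbβ j)
    have hge : ∀ m ∈ J.image f, k ≤ m := by
      intro m hm
      obtain ⟨j, hj, rfl⟩ := Finset.mem_image.mp hm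
      by_contra hcon
      push_neg at hcon
      have : j ∈ I k := Finset.mem_image.mpr
        ⟨e.symm j, Finset.mem_filter.mpr ⟨Finset.mem_univ _, hcon⟩, e.apply_symm_apply j⟩
      exact (Finset.disjoint_left.mp hJ hj) this
    calc ∑ j ∈ J, β j = ∑ m ∈ J.image f, b m := hsum.symm
      _ ≤ ∑ m ∈ Finset.Ico k (k + (J.image f).card), b m :=
          antitone_sum_le_aux hb (J.image f) k hge
      _ = ∑ m ∈ Finset.Ico k (k + J.card), b m := by rw [hcard]
  -- one of the stages 2^i - 1, i < ν, must work
  have main : ∃ i, i < ν ∧ ∀ J : Finset (Fin n), Disjoint J (I (2 ^ i - 1)) →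
      J.card ≤ (I (2 ^ i - 1)).card + 1 → ν * ∑ j ∈ J, β j ≤ S := by
    by_contra hcon
    push_neg at hcon
    have block : ∀ i < ν,
        S + 1 ≤ ν * ∑ m ∈ Finset.Ico (2 ^ i - 1) (2 ^ (i + 1) - 1), b m := by
      intro i hi
      obtain ⟨J, hdis, hcard, hlt⟩ := hcon i hi
      have hpow : 1 ≤ 2 ^ i := Nat.one_le_two_pow
      have hJc : J.card ≤ 2 ^ i := by
        have := cardI (2 ^ i - 1)
        omega
      have h1 : ∑ j ∈ J, β j ≤ ∑ m ∈ Finset.Ico (2 ^ i - 1) (2 ^ i - 1 + J.card), b m :=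
        key _ J hdis
      have h2 : ∑ m ∈ Finset.Ico (2 ^ i - 1) (2 ^ i - 1 + J.card), b m
          ≤ ∑ m ∈ Finset.Ico (2 ^ i - 1) (2 ^ (i + 1) - 1), b m := by
        apply Finset.sum_le_sum_of_subset
        apply Finset.Ico_subset_Ico le_rfl
        have : 2 ^ (i + 1) = 2 ^ i * 2 := pow_succ 2 i
        omega
      have h3 : ν * ∑ j ∈ J, β j ≤ ν * ∑ m ∈ Finset.Ico (2 ^ i - 1) (2 ^ (i + 1) - 1), b m :=
        Nat.mul_le_mul_left ν (le_trans h1 h2)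
      omega
    have blocks_sum : ∀ m : ℕ,
        ∑ i ∈ Finset.range m, (∑ x ∈ Finset.Ico (2 ^ i - 1) (2 ^ (i + 1) - 1), b x)
          = ∑ x ∈ Finset.Ico 0 (2 ^ m - 1), b x := by
      intro m
      induction m with
      | zero => simp
      | succ m ih =>
        rw [Finset.sum_range_succ, ih]
        refine Finset.sum_Ico_consecutive b (Nat.zero_le _) ?_
        have : 2 ^ m ≤ 2 ^ (m + 1) := Nat.pow_le_pow_right (by norm_num) (by omega)
        omega
    have hsum1 : ν * (S + 1) ≤ ν * ∑ i ∈ Finset.range ν,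
        (∑ x ∈ Finset.Ico (2 ^ i - 1) (2 ^ (i + 1) - 1), b x) := by
      calc ν * (S + 1) = ∑ _i ∈ Finset.range ν, (S + 1) := by
            rw [Finset.sum_const, Finset.card_range, smul_eq_mul, mul_comm]
        _ ≤ ∑ i ∈ Finset.range ν,
              ν * (∑ x ∈ Finset.Ico (2 ^ i - 1) (2 ^ (i + 1) - 1), b x) := by
            refine Finset.sum_le_sum ?_
            intro i hi
            exact block i (Finset.mem_range.mp hi)
        _ = ν * ∑ i ∈ Finset.range ν,
              (∑ x ∈ Finset.Ico (2 ^ i - 1) (2 ^ (i + 1) - 1), b x) :=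
            (Finset.mul_sum _ _ _).symm
    have hsum2 : ∑ i ∈ Finset.range ν,
        (∑ x ∈ Finset.Ico (2 ^ i - 1) (2 ^ (i + 1) - 1), b x) ≤ S := by
      rw [blocks_sum]
      have : Finset.Ico 0 (2 ^ ν - 1) = Finset.range (2 ^ ν - 1) := by
        rw [Finset.range_eq_Ico]
      rw [this]
      exact hrange _
    have : ν * (S + 1) ≤ ν * S := le_trans hsum1 (Nat.mul_le_mul_left ν hsum2)
    rw [Nat.mul_add, Nat.mul_one] at this
    omega
  obtain ⟨i, hi, hP⟩ := main
  refine ⟨(I (2 ^ i - 1)).filter (fun j => β j ≠ 0), ?_, ?_, ?_⟩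
  · have h1 : ((I (2 ^ i - 1)).filter (fun j => β j ≠ 0)).card ≤ (I (2 ^ i - 1)).card :=
      Finset.card_filter_le _ _
    have h2 := cardI (2 ^ i - 1)
    have h3 : 2 ^ i ≤ 2 ^ (ν - 1) := Nat.pow_le_pow_right (by norm_num) (by omega)
    omega
  · intro j hj
    exact (Finset.mem_filter.mp hj).2
  · intro J hdis hcard
    set J2 := J \ I (2 ^ i - 1) with hJ2
    have hdis2 : Disjoint J2 (I (2 ^ i - 1)) := Finset.sdiff_disjoint
    have hsumeq : ∑ j ∈ J2, β j = ∑ j ∈ J, β j := by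
      refine Finset.sum_subset (Finset.sdiff_subset) ?_
      intro j hjJ hjJ2
      by_contra hne
      have hjI : j ∈ I (2 ^ i - 1) := by
        by_contra h
        exact hjJ2 (Finset.mem_sdiff.mpr ⟨hjJ, h⟩)
      have : j ∈ (I (2 ^ i - 1)).filter (fun j => β j ≠ 0) :=
        Finset.mem_filter.mpr ⟨hjI, hne⟩
      exact (Finset.disjoint_left.mp hdis hjJ) this
    have hcard2 : J2.card ≤ (I (2 ^ i - 1)).card + 1 := by
      have hl : J2.card ≤ J.card := Finset.card_le_card Finset.sdiff_subset
      have : ((I (2 ^ i - 1)).filter (fun j => β j ≠ 0)).card ≤ (I (2 ^ i - 1)).card :=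
        Finset.card_filter_le _ _
      omega
    rw [← hsumeq]
    exact hP J2 hdis2 hcard2
end

section
/- Let (X,d) be a metric space and μ a Borel measure on X such that every ball has finite measure V(x,r) = μ(B(x,r)), satisfying the doubling condition V(x,λr) ≤ C'(1+λ)^Q V(x,r) for all x, λ,r ≥ 0. Let 1 ≤ p < q ≤ ∞ and a,b ≥ 0 with b > a + Q(1/p − 1/q). Then there is a constant C (depending only on p,q,a,b,Q,C') such that for every measurable kernel K : X×X → ℂ one has ⦀K⦀_{p,a} ≤ C·⦀K⦀_{q,b}. -/
open MeasureTheory Metric ENNReal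
set_option maxHeartbeats 1000000

lemma real_geom_bound {C' Q s : ℝ} (hC' : 0 < C') (hQ : 0 < Q) (j : ℕ) :
    ((2:ℝ)^j)^(-s) * (C' * (1 + (2:ℝ)^(j+1)) ^ Q) ≤ (C' * 2^(2*Q)) * ((2:ℝ)^(Q-s))^j := by
  have h2 : (0:ℝ) < 2 := two_pos
  have e1 : ((2:ℝ)^j)^(-s) = (2:ℝ)^(-(s*j)) := by
    rw [← Real.rpow_natCast 2 j, ← Real.rpow_mul (by norm_num)]
    ring_nf
  have e2 : ((2:ℝ)^(Q-s))^j = (2:ℝ)^((Q-s)*j) := by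
    rw [Real.rpow_mul (by norm_num), Real.rpow_natCast]
  have e3 : (1 + (2:ℝ)^(j+1))^Q ≤ (2:ℝ)^(((j:ℝ)+2)*Q) := by
    have h4 : (2:ℝ)^(((j:ℝ)+2)*Q) = ((2:ℝ)^(j+2:ℕ))^Q := by
      rw [← Real.rpow_natCast 2 (j+2), ← Real.rpow_mul (by norm_num)]
      push_cast; ring_nf
    rw [h4]
    apply Real.rpow_le_rpow (by positivity) _ hQ.le
    have h5 : (1:ℝ) ≤ 2^(j+1) := one_le_pow₀ (by norm_num)
    calc (1:ℝ) + 2^(j+1) ≤ 2^(j+1) + 2^(j+1) := by linarith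
      _ = 2^(j+2) := by ring
  calc ((2:ℝ)^j)^(-s) * (C' * (1 + (2:ℝ)^(j+1)) ^ Q)
      ≤ (2:ℝ)^(-(s*j)) * (C' * (2:ℝ)^(((j:ℝ)+2)*Q)) := by
        rw [e1]
        exact mul_le_mul_of_nonneg_left (mul_le_mul_of_nonneg_left e3 hC'.le)
          (Real.rpow_nonneg (by norm_num) _)
    _ = (C' * 2^(2*Q)) * ((2:ℝ)^(Q-s))^j := by
        rw [e2, show C' * 2^(2*Q) * (2:ℝ)^((Q-s)*(j:ℝ)) = C' * (2^(2*Q) * 2^((Q-s)*(j:ℝ))) from by ring,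
          ← Real.rpow_add h2,
          show (2:ℝ)^(-(s*(j:ℝ))) * (C' * 2^(((j:ℝ)+2)*Q)) = C' * (2^(-(s*(j:ℝ))) * 2^(((j:ℝ)+2)*Q)) from by ring,
          ← Real.rpow_add h2]
        congr 2
        ring

noncomputable def cruxC (s : ℝ) : ℕ → ℝ≥0∞
  | 0 => 1
  | (j+1) => ENNReal.ofReal (((2:ℝ)^j) ^ (-s))

def cruxA {X : Type} [MetricSpace X] (y : X) : ℕ → Set X
  | 0 => ball y 1
  | (j+1) => ball y (2^(j+1)) \ ball y (2^j)

lemma crux {X : Type} [MetricSpace X] [MeasurableSpace X] [BorelSpace X] (μ : Measure X)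
    {C' Q : ℝ} (hC' : 0 < C') (hQ : 0 < Q)
    (hdoub : ∀ (x : X) (lam r : ℝ), 0 ≤ lam → 0 ≤ r →
      μ (ball x (lam * r)) ≤ ENNReal.ofReal (C' * (1 + lam) ^ Q) * μ (ball x r))
    {s : ℝ} (hs : Q < s) (y : X) :
    ∫⁻ x, ENNReal.ofReal ((1 + dist x y) ^ (-s)) ∂μ ≤
      (1 + ENNReal.ofReal (C' * 2 ^ (2 * Q)) * (1 - ENNReal.ofReal ((2:ℝ) ^ (Q - s)))⁻¹)
        * μ (ball y 1) := by
  have hA : ∀ j, MeasurableSet (cruxA y j) := by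
    rintro (_|j)
    · exact measurableSet_ball
    · exact measurableSet_ball.diff measurableSet_ball
  have hpt : ∀ x, ENNReal.ofReal ((1 + dist x y) ^ (-s)) ≤
      ∑' (j : ℕ), (cruxA y j).indicator (fun _ => cruxC s j) x := by
    intro x
    have hd : 0 ≤ dist x y := dist_nonneg
    have hex : ∃ n : ℕ, dist x y < 2^n := pow_unbounded_of_one_lt _ one_lt_two
    have key : ENNReal.ofReal ((1 + dist x y) ^ (-s)) ≤
        (cruxA y (Nat.find hex)).indicator (fun _ => cruxC s (Nat.find hex)) x := by
      have h1 : dist x y < 2 ^ (Nat.find hex) := Nat.find_spec hex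
      rcases hn : Nat.find hex with _|j
      · rw [hn] at h1
        have hx : x ∈ cruxA y 0 := by simpa [cruxA] using h1
        rw [Set.indicator_of_mem hx]
        refine ENNReal.ofReal_le_one.mpr ?_
        exact Real.rpow_le_one_of_one_le_of_nonpos (by linarith) (by linarith)
      · rw [hn] at h1
        have hj : j < Nat.find hex := by omega
        have h2 : ¬ dist x y < 2^j := Nat.find_min hex hj
        have hx : x ∈ cruxA y (j+1) := by
          simp only [cruxA, Set.mem_diff, mem_ball]
          exact ⟨h1, h2⟩
        rw [Set.indicator_of_mem hx]
        refine ENNReal.ofReal_le_ofReal ?_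
        refine Real.rpow_le_rpow_of_nonpos (by positivity) (by push_neg at h2; linarith)
          (by linarith)
    exact key.trans (ENNReal.le_tsum _)
  have hterm : ∀ j : ℕ, cruxC s (j+1) * μ (cruxA y (j+1)) ≤
      (ENNReal.ofReal (C' * 2^(2*Q)) * ENNReal.ofReal ((2:ℝ)^(Q-s))^j) * μ (ball y 1) := by
    intro j
    have hμA : μ (cruxA y (j+1)) ≤ ENNReal.ofReal (C' * (1 + (2:ℝ)^(j+1)) ^ Q) * μ (ball y 1) := by
      refine le_trans (measure_mono Set.diff_subset) ?_
      have h := hdoub y ((2:ℝ)^(j+1)) 1 (by positivity) zero_le_one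
      rwa [mul_one] at h
    calc cruxC s (j+1) * μ (cruxA y (j+1))
        ≤ ENNReal.ofReal (((2:ℝ)^j)^(-s)) *
          (ENNReal.ofReal (C' * (1 + (2:ℝ)^(j+1))^Q) * μ (ball y 1)) := by
          exact mul_le_mul_right hμA _
      _ = ENNReal.ofReal (((2:ℝ)^j)^(-s) * (C' * (1 + (2:ℝ)^(j+1))^Q)) * μ (ball y 1) := by
          rw [← mul_assoc, ← ENNReal.ofReal_mul (Real.rpow_nonneg (by positivity) _)]
      _ ≤ ENNReal.ofReal ((C' * 2^(2*Q)) * ((2:ℝ)^(Q-s))^j) * μ (ball y 1) :=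
          mul_le_mul_left (ENNReal.ofReal_le_ofReal (real_geom_bound hC' hQ j)) _
      _ = (ENNReal.ofReal (C' * 2^(2*Q)) * ENNReal.ofReal ((2:ℝ)^(Q-s))^j) * μ (ball y 1) := by
          rw [ENNReal.ofReal_mul (by positivity), ENNReal.ofReal_pow (by positivity)]
  calc ∫⁻ x, ENNReal.ofReal ((1 + dist x y) ^ (-s)) ∂μ
      ≤ ∫⁻ x, ∑' (j : ℕ), (cruxA y j).indicator (fun _ => cruxC s j) x ∂μ := lintegral_mono hpt
    _ = ∑' (j : ℕ), ∫⁻ x, (cruxA y j).indicator (fun _ => cruxC s j) x ∂μ :=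
        lintegral_tsum (fun j => (measurable_const.indicator (hA j)).aemeasurable)
    _ = ∑' (j : ℕ), cruxC s j * μ (cruxA y j) :=
        tsum_congr (fun j => lintegral_indicator_const (hA j) _)
    _ = cruxC s 0 * μ (cruxA y 0) + ∑' (j : ℕ), cruxC s (j+1) * μ (cruxA y (j+1)) :=
        tsum_eq_zero_add' ENNReal.summable
    _ ≤ μ (ball y 1) + ∑' (j : ℕ), (ENNReal.ofReal (C' * 2^(2*Q)) * ENNReal.ofReal ((2:ℝ)^(Q-s))^j)
          * μ (ball y 1) := by
        have h0 : cruxC s 0 * μ (cruxA y 0) = μ (ball y 1) := by simp [cruxC, cruxA]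
        rw [h0]
        exact add_le_add_right (ENNReal.tsum_le_tsum hterm) _
    _ = (1 + ENNReal.ofReal (C' * 2 ^ (2 * Q)) * (1 - ENNReal.ofReal ((2:ℝ) ^ (Q - s)))⁻¹)
          * μ (ball y 1) := by
        rw [ENNReal.tsum_mul_right, ENNReal.tsum_mul_left, ENNReal.tsum_geometric,
          add_mul, one_mul]

lemma esssup_step {X : Type} [MeasurableSpace X] (μ : Measure X) (g h : X → ℝ≥0∞)
    (hh : Measurable h) {pR : ℝ} (hp0 : 0 < pR) :
    (∫⁻ x, (g x * h x) ^ pR ∂μ) ^ (1/pR) ≤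
      essSup g μ * (∫⁻ x, h x ^ pR ∂μ) ^ (1/pR) := by
  have hae : ∀ᵐ x ∂μ, g x ≤ essSup g μ := ENNReal.ae_le_essSup g
  have h1 : ∫⁻ x, (g x * h x) ^ pR ∂μ ≤ (essSup g μ) ^ pR * ∫⁻ x, h x ^ pR ∂μ := by
    rw [← lintegral_const_mul _ (hh.pow_const pR)]
    refine lintegral_mono_ae ?_
    filter_upwards [hae] with x hx
    calc (g x * h x) ^ pR ≤ (essSup g μ * h x) ^ pR := by gcongr
      _ = (essSup g μ) ^ pR * h x ^ pR := ENNReal.mul_rpow_of_nonneg _ _ hp0.le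
  calc (∫⁻ x, (g x * h x) ^ pR ∂μ) ^ (1/pR)
      ≤ ((essSup g μ) ^ pR * ∫⁻ x, h x ^ pR ∂μ) ^ (1/pR) :=
        ENNReal.rpow_le_rpow h1 (by positivity)
    _ = essSup g μ * (∫⁻ x, h x ^ pR ∂μ) ^ (1/pR) := by
        rw [ENNReal.mul_rpow_of_nonneg _ _ (by positivity), ← ENNReal.rpow_mul,
          mul_one_div, div_self hp0.ne', ENNReal.rpow_one]

lemma holder_step {X : Type} [MeasurableSpace X] (μ : Measure X) (g h : X → ℝ≥0∞)
    (hg : Measurable g) (hh : Measurable h) {pR qR rr : ℝ}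
    (hp0 : 0 < pR) (hpq : pR < qR) (hq0 : 0 < qR) (hrr : rr = (pR⁻¹ - qR⁻¹)⁻¹) :
    (∫⁻ x, (g x * h x) ^ pR ∂μ) ^ (1/pR) ≤
      (∫⁻ x, g x ^ qR ∂μ) ^ (1/qR) * (∫⁻ x, h x ^ rr ∂μ) ^ (1/rr) := by
  have hu : 0 < pR⁻¹ - qR⁻¹ := by
    have : qR⁻¹ < pR⁻¹ := by
      rw [inv_lt_inv₀ hq0 hp0]
      exact hpq
    linarith
  have hrr0 : 0 < rr := hrr ▸ inv_pos.mpr hu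
  have hconj : Real.HolderConjugate (qR/pR) (rr/pR) := by
    rw [Real.holderConjugate_iff]
    constructor
    · exact (one_lt_div hp0).mpr hpq
    · rw [hrr, inv_div, inv_div, div_eq_mul_inv pR (pR⁻¹ - qR⁻¹)⁻¹, inv_inv]
      field_simp
      ring
  have hH := ENNReal.lintegral_mul_le_Lp_mul_Lq μ hconj
    ((hg.pow_const pR).aemeasurable) ((hh.pow_const pR).aemeasurable)
  have e1 : ∀ x, ((fun x => g x ^ pR) * fun x => h x ^ pR) x = (g x * h x) ^ pR := by
    intro x
    simp [ENNReal.mul_rpow_of_nonneg _ _ hp0.le]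
  have e2 : ∀ x : X, (g x ^ pR) ^ (qR/pR) = g x ^ qR := by
    intro x
    rw [← ENNReal.rpow_mul]
    congr 1
    field_simp
  have e3 : ∀ x : X, (h x ^ pR) ^ (rr/pR) = h x ^ rr := by
    intro x
    rw [← ENNReal.rpow_mul]
    congr 1
    field_simp
  simp only [e1, e2, e3] at hH
  have hH2 := ENNReal.rpow_le_rpow hH (le_of_lt (by positivity : (0:ℝ) < 1/pR))
  calc (∫⁻ x, (g x * h x) ^ pR ∂μ) ^ (1/pR)
      ≤ ((∫⁻ x, g x ^ qR ∂μ) ^ (1/(qR/pR)) * (∫⁻ x, h x ^ rr ∂μ) ^ (1/(rr/pR))) ^ (1/pR) := hH2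
    _ = (∫⁻ x, g x ^ qR ∂μ) ^ (1/qR) * (∫⁻ x, h x ^ rr ∂μ) ^ (1/rr) := by
        rw [ENNReal.mul_rpow_of_nonneg _ _ (by positivity), ← ENNReal.rpow_mul,
          ← ENNReal.rpow_mul,
          show 1/(qR/pR) * (1/pR) = 1/qR by field_simp,
          show 1/(rr/pR) * (1/pR) = 1/rr by field_simp]

/-- Weighted mixed norm for `ℝ≥0∞`-valued kernels:
`⦀K⦀_{p,s} = ess sup_y V(y,1)^{1/p'} ‖K(·,y)(1+d(·,y))^s‖_{L^p}`. -/
noncomputable def kNormE {X : Type} [MetricSpace X] [MeasurableSpace X] (μ : Measure X)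
    (p : ℝ≥0∞) (s : ℝ) (K : X → X → ℝ≥0∞) : ℝ≥0∞ :=
  essSup (fun y => (μ (ball y 1)) ^ ((1 - p⁻¹).toReal) *
    (if p = ∞ then essSup (fun x => K x y * ENNReal.ofReal ((1 + dist x y) ^ s)) μ
     else (∫⁻ x, (K x y * ENNReal.ofReal ((1 + dist x y) ^ s)) ^ p.toReal ∂μ) ^ (1 / p.toReal))) μ

/-- Weighted mixed norm `⦀K⦀_{p,s}` for complex-valued kernels. -/
noncomputable def kNorm {X : Type} [MetricSpace X] [MeasurableSpace X] (μ : Measure X)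
    (p : ℝ≥0∞) (s : ℝ) (K : X → X → ℂ) : ℝ≥0∞ :=
  kNormE μ p s (fun x y => (‖K x y‖₊ : ℝ≥0∞))

/-- Hölder-type comparison of weighted kernel norms on a doubling space:
for `1 ≤ p < q ≤ ∞` and `b > a + Q(1/p − 1/q)`, `⦀K⦀_{p,a} ≤ C ⦀K⦀_{q,b}`,
with `C` depending only on `p, q, a, b, Q, C'`. -/
theorem stmt4 (p q : ℝ≥0∞) (a b Q C' : ℝ) (hp : 1 ≤ p) (hpq : p < q)
    (ha : 0 ≤ a) (hb : 0 ≤ b)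
    (hab : a + Q * ((p⁻¹).toReal - (q⁻¹).toReal) < b)
    (hQ : 0 < Q) (hC' : 0 < C') :
    ∃ C : ℝ, 0 ≤ C ∧
      ∀ (X : Type) [MetricSpace X] [MeasurableSpace X] [BorelSpace X] (μ : Measure X),
        (∀ (x : X) (r : ℝ), μ (ball x r) < ∞) →
        (∀ (x : X) (lam r : ℝ), 0 ≤ lam → 0 ≤ r →
          μ (ball x (lam * r)) ≤ ENNReal.ofReal (C' * (1 + lam) ^ Q) * μ (ball x r)) →
        ∀ K : X → X → ℂ, Measurable (Function.uncurry K) →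
          kNorm μ p a K ≤ ENNReal.ofReal C * kNorm μ q b K := by
  have hptop : p ≠ ∞ := (hpq.trans_le le_top).ne
  have hp0 : p ≠ 0 := (zero_lt_one.trans_le hp).ne'
  have hpRpos : 0 < p.toReal := ENNReal.toReal_pos hp0 hptop
  have hpinv : (p⁻¹).toReal = p.toReal⁻¹ := ENNReal.toReal_inv p
  set u : ℝ := (p⁻¹).toReal - (q⁻¹).toReal with hu_def
  have hu_pos : 0 < u := by
    rcases eq_or_ne q ∞ with hq | hq
    · rw [hu_def, hq]
      simp only [ENNReal.inv_top, ENNReal.toReal_zero, sub_zero, hpinv]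
      positivity
    · have h1 : q⁻¹ < p⁻¹ := ENNReal.inv_lt_inv.mpr hpq
      have h2 : (q⁻¹).toReal < (p⁻¹).toReal :=
        ENNReal.toReal_strict_mono (by simp [hp0]) h1
      rw [hu_def]
      linarith
  set s : ℝ := (b - a) * u⁻¹ with hs_def
  have hQs : Q < s := by
    have h1 : Q * u < b - a := by linarith
    have h2 : Q < (b - a) / u := (lt_div_iff₀ hu_pos).mpr h1
    rwa [div_eq_mul_inv] at h2
  set D : ℝ≥0∞ := 1 + ENNReal.ofReal (C' * 2 ^ (2 * Q)) *
      (1 - ENNReal.ofReal ((2:ℝ) ^ (Q - s)))⁻¹ with hD_def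
  have hD : D ≠ ∞ := by
    have h1 : ENNReal.ofReal ((2:ℝ) ^ (Q - s)) < 1 := by
      rw [ENNReal.ofReal_lt_one]
      exact Real.rpow_lt_one_of_one_lt_of_neg one_lt_two (by linarith)
    have h2 : (1:ℝ≥0∞) - ENNReal.ofReal ((2:ℝ) ^ (Q - s)) ≠ 0 := (tsub_pos_of_lt h1).ne'
    rw [hD_def]
    exact ENNReal.add_ne_top.mpr ⟨ENNReal.one_ne_top,
      ENNReal.mul_ne_top ENNReal.ofReal_ne_top (ENNReal.inv_ne_top.mpr h2)⟩
  have hDu : D ^ u ≠ ∞ := ENNReal.rpow_ne_top_of_nonneg hu_pos.le hD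
  refine ⟨(D ^ u).toReal, ENNReal.toReal_nonneg, ?_⟩
  intro X _ _ _ μ hfin hdoub K hK
  rw [ENNReal.ofReal_toReal hDu]
  have hep : (1 - p⁻¹).toReal = 1 - (p⁻¹).toReal := by
    rw [ENNReal.toReal_sub_of_le (ENNReal.inv_le_one.mpr hp) ENNReal.one_ne_top]
    simp
  have heq' : (1 - q⁻¹).toReal = 1 - (q⁻¹).toReal := by
    rw [ENNReal.toReal_sub_of_le (ENNReal.inv_le_one.mpr (hp.trans hpq.le)) ENNReal.one_ne_top]
    simp
  have hsum : (1 - p⁻¹).toReal + u = (1 - q⁻¹).toReal := by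
    rw [hep, heq', hu_def]; ring
  rw [kNorm, kNorm, kNormE, kNormE]
  simp only [if_neg hptop]
  refine le_trans (essSup_mono_ae (Filter.Eventually.of_forall fun y => ?_))
    (le_of_eq essSup_const_mul)
  have hdistm : Measurable (fun x : X => dist x y) :=
    (continuous_id.dist continuous_const).measurable
  have hfm : Measurable (fun x : X => (‖K x y‖₊ : ℝ≥0∞)) :=
    (hK.comp (measurable_id.prodMk measurable_const)).nnnorm.coe_nnreal_ennreal
  have hgm : Measurable (fun x : X =>
      (‖K x y‖₊ : ℝ≥0∞) * ENNReal.ofReal ((1 + dist x y) ^ b)) :=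
    hfm.mul (ENNReal.measurable_ofReal.comp
      ((measurable_const.add hdistm).pow measurable_const))
  have hhm : Measurable (fun x : X => ENNReal.ofReal ((1 + dist x y) ^ (a - b))) :=
    ENNReal.measurable_ofReal.comp ((measurable_const.add hdistm).pow measurable_const)
  have hdpos : ∀ x : X, (0:ℝ) < 1 + dist x y := fun x => by
    have : (0:ℝ) ≤ dist x y := dist_nonneg
    linarith
  have hsplit : ∀ x : X, (‖K x y‖₊ : ℝ≥0∞) * ENNReal.ofReal ((1 + dist x y) ^ a)
      = ((‖K x y‖₊ : ℝ≥0∞) * ENNReal.ofReal ((1 + dist x y) ^ b))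
        * ENNReal.ofReal ((1 + dist x y) ^ (a - b)) := by
    intro x
    rw [mul_assoc]
    congr 1
    rw [← ENNReal.ofReal_mul (Real.rpow_nonneg (hdpos x).le _), ← Real.rpow_add (hdpos x)]
    congr 1
    ring
  have hcrux : ∫⁻ x, (ENNReal.ofReal ((1 + dist x y) ^ (a - b))) ^ u⁻¹ ∂μ
      ≤ D * μ (ball y 1) := by
    have heqq : ∀ x : X, (ENNReal.ofReal ((1 + dist x y) ^ (a - b))) ^ u⁻¹
        = ENNReal.ofReal ((1 + dist x y) ^ (-s)) := by
      intro x
      rw [ENNReal.ofReal_rpow_of_nonneg (Real.rpow_nonneg (hdpos x).le _)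
        (inv_pos.mpr hu_pos).le, ← Real.rpow_mul (hdpos x).le]
      congr 1
      rw [hs_def]; ring
    simp_rw [heqq]
    exact crux μ hC' hQ hdoub hQs y
  simp only [hsplit]
  rcases eq_or_ne q ∞ with hq | hq
  · simp only [if_pos hq]
    have hu_eq : u⁻¹ = p.toReal := by
      rw [hu_def, hq]
      simp [hpinv]
    calc μ (ball y 1) ^ (1 - p⁻¹).toReal *
          (∫⁻ x, (((‖K x y‖₊ : ℝ≥0∞) * ENNReal.ofReal ((1 + dist x y) ^ b))
            * ENNReal.ofReal ((1 + dist x y) ^ (a - b))) ^ p.toReal ∂μ) ^ (1 / p.toReal)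
        ≤ μ (ball y 1) ^ (1 - p⁻¹).toReal *
          (essSup (fun x => (‖K x y‖₊ : ℝ≥0∞) * ENNReal.ofReal ((1 + dist x y) ^ b)) μ *
            (∫⁻ x, (ENNReal.ofReal ((1 + dist x y) ^ (a - b))) ^ p.toReal ∂μ)
              ^ (1 / p.toReal)) :=
          mul_le_mul_right (esssup_step μ _ _ hhm hpRpos) _
      _ ≤ μ (ball y 1) ^ (1 - p⁻¹).toReal *
          (essSup (fun x => (‖K x y‖₊ : ℝ≥0∞) * ENNReal.ofReal ((1 + dist x y) ^ b)) μ *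
            (D * μ (ball y 1)) ^ u) := by
          gcongr
          rw [← hu_eq, one_div, inv_inv]
          exact ENNReal.rpow_le_rpow hcrux hu_pos.le
      _ = D ^ u * (μ (ball y 1) ^ ((1 - p⁻¹).toReal + u) *
            essSup (fun x => (‖K x y‖₊ : ℝ≥0∞) * ENNReal.ofReal ((1 + dist x y) ^ b)) μ) := by
          rw [ENNReal.mul_rpow_of_nonneg _ _ hu_pos.le,
            ENNReal.rpow_add_of_nonneg _ _ ENNReal.toReal_nonneg hu_pos.le]
          ring
      _ = D ^ u * (μ (ball y 1) ^ (1 - q⁻¹).toReal *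
            essSup (fun x => (‖K x y‖₊ : ℝ≥0∞) * ENNReal.ofReal ((1 + dist x y) ^ b)) μ) := by
          rw [hsum]
  · simp only [if_neg hq]
    have hq0 : q ≠ 0 := (zero_lt_one.trans_le (hp.trans hpq.le)).ne'
    have hqRpos : 0 < q.toReal := ENNReal.toReal_pos hq0 hq
    have hpqR : p.toReal < q.toReal := ENNReal.toReal_strict_mono hq hpq
    have hqinv : (q⁻¹).toReal = q.toReal⁻¹ := ENNReal.toReal_inv q
    have hrr : u⁻¹ = (p.toReal⁻¹ - q.toReal⁻¹)⁻¹ := by rw [hu_def, hpinv, hqinv]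
    calc μ (ball y 1) ^ (1 - p⁻¹).toReal *
          (∫⁻ x, (((‖K x y‖₊ : ℝ≥0∞) * ENNReal.ofReal ((1 + dist x y) ^ b))
            * ENNReal.ofReal ((1 + dist x y) ^ (a - b))) ^ p.toReal ∂μ) ^ (1 / p.toReal)
        ≤ μ (ball y 1) ^ (1 - p⁻¹).toReal *
          ((∫⁻ x, ((‖K x y‖₊ : ℝ≥0∞) * ENNReal.ofReal ((1 + dist x y) ^ b)) ^ q.toReal ∂μ)
              ^ (1 / q.toReal) *
            (∫⁻ x, (ENNReal.ofReal ((1 + dist x y) ^ (a - b))) ^ u⁻¹ ∂μ) ^ (1 / u⁻¹)) :=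
          mul_le_mul_right (holder_step μ _ _ hgm hhm hpRpos hpqR hqRpos hrr) _
      _ ≤ μ (ball y 1) ^ (1 - p⁻¹).toReal *
          ((∫⁻ x, ((‖K x y‖₊ : ℝ≥0∞) * ENNReal.ofReal ((1 + dist x y) ^ b)) ^ q.toReal ∂μ)
              ^ (1 / q.toReal) *
            (D * μ (ball y 1)) ^ u) := by
          gcongr
          rw [one_div, inv_inv]
          exact ENNReal.rpow_le_rpow hcrux hu_pos.le
      _ = D ^ u * (μ (ball y 1) ^ ((1 - p⁻¹).toReal + u) *
            (∫⁻ x, ((‖K x y‖₊ : ℝ≥0∞) * ENNReal.ofReal ((1 + dist x y) ^ b)) ^ q.toReal ∂μ)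
              ^ (1 / q.toReal)) := by
          rw [ENNReal.mul_rpow_of_nonneg _ _ hu_pos.le,
            ENNReal.rpow_add_of_nonneg _ _ ENNReal.toReal_nonneg hu_pos.le]
          ring
      _ = D ^ u * (μ (ball y 1) ^ (1 - q⁻¹).toReal *
            (∫⁻ x, ((‖K x y‖₊ : ℝ≥0∞) * ENNReal.ofReal ((1 + dist x y) ^ b)) ^ q.toReal ∂μ)
              ^ (1 / q.toReal)) := by
          rw [hsum]
end
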